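/- The area between the ODC R and the diagonal where R exceeds it equals an integral against F2: ∫₀¹ max{R(u) − u, 0} du = ∫_ℝ max{F1(x) − F2(x), 0} dF2(x). -/

import Mathlib

open Set Filter MeasureTheory

lemma f2_nonneg (f2 : StieltjesFunction ℝ)
    (hf2bot : Tendsto (f2 : ℝ → ℝ) atBot (nhds 0)) (x : ℝ) : 0 ≤ f2 x :=
  le_of_tendsto hf2bot ((eventually_le_atBot x).mono fun _ hy => f2.mono hy)

lemma f2_le_one (f2 : StieltjesFunction ℝ)
    (hf2top : Tendsto (f2 : ℝ → ℝ) atTop (nhds 1)) (x : ℝ) : f2 x ≤ 1 :=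
  ge_of_tendsto hf2top ((eventually_ge_atTop x).mono fun _ hy => f2.mono hy)

lemma meas_le (f2 : StieltjesFunction ℝ) (hf2c : Continuous (f2 : ℝ → ℝ))
    (hf2bot : Tendsto (f2 : ℝ → ℝ) atBot (nhds 0))
    (hf2top : Tendsto (f2 : ℝ → ℝ) atTop (nhds 1))
    {b : ℝ} (hb : b < 1) :
    f2.measure {x | f2 x ≤ b} = ENNReal.ofReal b := by
  by_cases hne : {x : ℝ | f2 x ≤ b}.Nonempty
  · obtain ⟨x1, hx1⟩ : ∃ x1, b < f2 x1 := (hf2top.eventually_const_lt hb).exists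
    have hbdd : BddAbove {x : ℝ | f2 x ≤ b} := by
      refine ⟨x1, fun x hx => ?_⟩
      by_contra h
      push_neg at h
      exact absurd (hx1.trans_le ((f2.mono h.le).trans hx)) (lt_irrefl b)
    have hclosed : IsClosed {x : ℝ | f2 x ≤ b} := isClosed_le hf2c continuous_const
    set c := sSup {x : ℝ | f2 x ≤ b} with hc
    have hcS : f2 c ≤ b := hclosed.csSup_mem hne hbdd
    have hSeq : {x : ℝ | f2 x ≤ b} = Iic c :=
      subset_antisymm (fun x hx => le_csSup hbdd hx) (fun x hx => (f2.mono hx).trans hcS)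
    have hfc : f2 c = b := by
      refine le_antisymm hcS ?_
      by_contra hlt
      push_neg at hlt
      have hev : ∀ᶠ x in nhds c, f2 x < b := (hf2c.tendsto c).eventually_lt_const hlt
      obtain ⟨x, hx1', hx2'⟩ :=
        ((hev.filter_mono nhdsWithin_le_nhds).and
          (eventually_mem_nhdsWithin (s := Ioi c))).exists
      exact absurd (le_csSup hbdd (le_of_lt hx1' : f2 x ≤ b)) (not_le.mpr hx2')
    rw [hSeq, f2.measure_Iic hf2bot, hfc, sub_zero]
  · rw [not_nonempty_iff_eq_empty] at hne
    have hb0 : b ≤ 0 := by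
      by_contra h
      push_neg at h
      obtain ⟨x, hx⟩ : ∃ x, f2 x < b := (hf2bot.eventually_lt_const h).exists
      have hmem : x ∈ {x : ℝ | f2 x ≤ b} := le_of_lt hx
      rw [hne] at hmem
      exact hmem
    rw [hne]
    simp [ENNReal.ofReal_eq_zero.mpr hb0]

lemma map_f2 (f2 : StieltjesFunction ℝ) (hf2c : Continuous (f2 : ℝ → ℝ))
    (hf2bot : Tendsto (f2 : ℝ → ℝ) atBot (nhds 0))
    (hf2top : Tendsto (f2 : ℝ → ℝ) atTop (nhds 1)) :
    f2.measure.map f2 = volume.restrict (Ioo (0:ℝ) 1) := by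
  haveI := f2.isProbabilityMeasure hf2bot hf2top
  haveI : IsProbabilityMeasure (f2.measure.map f2) :=
    Measure.isProbabilityMeasure_map hf2c.measurable.aemeasurable
  refine Measure.ext_of_Iic _ _ fun b => ?_
  rw [Measure.map_apply hf2c.measurable measurableSet_Iic,
    Measure.restrict_apply measurableSet_Iic]
  rcases le_or_gt 1 b with hb | hb
  · have h1 : (f2 : ℝ → ℝ) ⁻¹' Iic b = univ :=
      eq_univ_of_forall fun x => (f2_le_one f2 hf2top x).trans hb
    have h2 : Iic b ∩ Ioo (0:ℝ) 1 = Ioo 0 1 :=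
      inter_eq_self_of_subset_right fun x hx => le_trans hx.2.le hb
    rw [h1, h2, Real.volume_Ioo, f2.measure_univ hf2bot hf2top]
  · have h1 : (f2 : ℝ → ℝ) ⁻¹' Iic b = {x | f2 x ≤ b} := rfl
    rw [h1, meas_le f2 hf2c hf2bot hf2top hb]
    rcases le_or_gt b 0 with hb0 | hb0
    · have h2 : Iic b ∩ Ioo (0:ℝ) 1 = ∅ := by
        ext x
        simp only [mem_inter_iff, mem_Iic, mem_Ioo, mem_empty_iff_false, iff_false]
        rintro ⟨h1', h2', _⟩
        exact absurd (h2'.trans_le (h1'.trans hb0)) (lt_irrefl 0)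
      rw [h2]
      simp [ENNReal.ofReal_eq_zero.mpr hb0]
    · have h2 : Iic b ∩ Ioo (0:ℝ) 1 = Ioc 0 b := by
        ext x
        simp only [mem_inter_iff, mem_Iic, mem_Ioo, mem_Ioc]
        constructor
        · rintro ⟨h1', h2', _⟩; exact ⟨h2', h1'⟩
        · rintro ⟨h1', h2'⟩; exact ⟨h2', h1', h2'.trans_lt hb⟩
      rw [h2, Real.volume_Ioc, sub_zero]

/-- `∫₀¹ max (R u − u) 0 du = ∫ max (F1 x − F2 x) 0 dF2(x)`,
where the right-hand side is a Lebesgue–Stieltjes integral with respect to `F2`. -/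
theorem stmt1 (F1 : ℝ → ℝ) (f2 : StieltjesFunction ℝ)
    (hF1c : Continuous F1) (hF1m : Monotone F1)
    (hf2c : Continuous (f2 : ℝ → ℝ))
    (hF1bot : Tendsto F1 atBot (nhds 0)) (hF1top : Tendsto F1 atTop (nhds 1))
    (hf2bot : Tendsto (f2 : ℝ → ℝ) atBot (nhds 0))
    (hf2top : Tendsto (f2 : ℝ → ℝ) atTop (nhds 1))
    (Q2 : ℝ → ℝ) (hQ2 : ∀ u, Q2 u = sInf {x : ℝ | u ≤ f2 x})
    (R : ℝ → ℝ) (hR : ∀ u, R u = F1 (Q2 u)) :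
    ∫ u in Ioo (0:ℝ) 1, max (R u - u) 0
      = ∫ x, max (F1 x - f2 x) 0 ∂ f2.measure := by
  set μ := f2.measure with hμ
  set h : ℝ → ℝ := fun u => max (F1 (Q2 u) - u) 0 with hh
  -- basic properties of Q2
  have hSne : ∀ u : ℝ, u < 1 → {x : ℝ | u ≤ f2 x}.Nonempty :=
    fun u hu => (hf2top.eventually_const_le hu).exists
  have hSbd : ∀ u : ℝ, 0 < u → BddBelow {x : ℝ | u ≤ f2 x} := by
    intro u hu
    obtain ⟨a, ha⟩ : ∃ a, f2 a < u := (hf2bot.eventually_lt_const hu).exists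
    refine ⟨a, fun x hx => ?_⟩
    by_contra hax
    push_neg at hax
    exact absurd hx (not_le.mpr ((f2.mono hax.le).trans_lt ha))
  have hSclosed : ∀ u : ℝ, IsClosed {x : ℝ | u ≤ f2 x} :=
    fun u => isClosed_le continuous_const hf2c
  have hfQ2 : ∀ u : ℝ, 0 < u → u < 1 → f2 (Q2 u) = u := by
    intro u hu0 hu1
    rw [hQ2]
    have hmem : sInf {x : ℝ | u ≤ f2 x} ∈ {x : ℝ | u ≤ f2 x} :=
      (hSclosed u).csInf_mem (hSne u hu1) (hSbd u hu0)
    refine le_antisymm ?_ hmem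
    have hev : ∀ᶠ x in nhdsWithin (sInf {x : ℝ | u ≤ f2 x}) (Iio (sInf {x : ℝ | u ≤ f2 x})), f2 x ≤ u := by
      filter_upwards [self_mem_nhdsWithin] with x hx
      exact le_of_not_ge fun hcon => absurd (csInf_le (hSbd u hu0) hcon) (not_le.mpr hx)
    exact le_of_tendsto ((hf2c.tendsto _).mono_left nhdsWithin_le_nhds) hev
  -- null sets
  have hN1 : μ {x : ℝ | f2 x ≤ 0} = 0 := by
    rw [hμ, meas_le f2 hf2c hf2bot hf2top one_pos]; simp
  have hN2 : μ {x : ℝ | 1 ≤ f2 x} = 0 := by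
    by_cases hne : {x : ℝ | 1 ≤ f2 x}.Nonempty
    · obtain ⟨a, ha⟩ : ∃ a, f2 a < 1 := (hf2bot.eventually_lt_const one_pos).exists
      have hbdd : BddBelow {x : ℝ | 1 ≤ f2 x} := by
        refine ⟨a, fun x hx => ?_⟩
        by_contra hax
        push_neg at hax
        exact absurd hx (not_le.mpr ((f2.mono hax.le).trans_lt ha))
      have hc : 1 ≤ f2 (sInf {x : ℝ | 1 ≤ f2 x}) :=
        (hSclosed 1).csInf_mem hne hbdd
      have hsub : {x : ℝ | 1 ≤ f2 x} ⊆ Ici (sInf {x : ℝ | 1 ≤ f2 x}) :=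
        fun x hx => csInf_le hbdd hx
      refine le_antisymm ?_ zero_le
      calc μ {x : ℝ | 1 ≤ f2 x} ≤ μ (Ici (sInf {x : ℝ | 1 ≤ f2 x})) := measure_mono hsub
        _ = ENNReal.ofReal (1 - f2 (sInf {x : ℝ | 1 ≤ f2 x})) := by
              rw [f2.measure_Ici hf2top, leftLim_eq_of_tendsto
                (h := nhdsLT_neBot _)
                ((hf2c.tendsto _).mono_left nhdsWithin_le_nhds)]
        _ = 0 := ENNReal.ofReal_eq_zero.mpr (by linarith)
    · rw [not_nonempty_iff_eq_empty] at hne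
      rw [hne, measure_empty]
  set A : ℚ → Set ℝ := fun q => {x : ℝ | (q : ℝ) < x ∧ f2 x = f2 q ∧ f2 x < 1} with hA
  have hAnull : ∀ q : ℚ, μ (A q) = 0 := by
    intro q
    by_cases hne : (A q).Nonempty
    · obtain ⟨x0, hx0⟩ := hne
      have hq1 : f2 q < 1 := hx0.2.1 ▸ hx0.2.2
      obtain ⟨x1, hx1⟩ : ∃ x1, f2 (q : ℝ) < f2 x1 := (hf2top.eventually_const_lt hq1).exists
      have hbdd : BddAbove (A q) := by
        refine ⟨x1, fun x hx => ?_⟩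
        by_contra hax
        push_neg at hax
        exact absurd (hx.2.1 ▸ f2.mono hax.le) (not_le.mpr hx1)
      set c := sSup (A q) with hc
      have hsub : A q ⊆ Ioc (q : ℝ) c := fun x hx => ⟨hx.1, le_csSup hbdd hx⟩
      have hfc : f2 c ≤ f2 q := by
        have h1 : c ∈ closure (A q) := csSup_mem_closure ⟨x0, hx0⟩ hbdd
        have h2 : closure (A q) ⊆ {x : ℝ | f2 x ≤ f2 q} := by
          refine (isClosed_le hf2c continuous_const).closure_subset_iff.mpr ?_
          exact fun x hx => hx.2.1.le
        exact h2 h1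
      refine le_antisymm ?_ zero_le
      calc μ (A q) ≤ μ (Ioc (q : ℝ) c) := measure_mono hsub
        _ = ENNReal.ofReal (f2 c - f2 q) := f2.measure_Ioc _ _
        _ = 0 := ENNReal.ofReal_eq_zero.mpr (by linarith)
    · rw [not_nonempty_iff_eq_empty] at hne
      rw [hne, measure_empty]
  have hBnull : μ ({x : ℝ | f2 x ≤ 0} ∪ {x : ℝ | 1 ≤ f2 x} ∪ ⋃ q : ℚ, A q) = 0 :=
    measure_union_null (measure_union_null hN1 hN2) (measure_iUnion_null hAnull)
  -- a.e. identity
  have hae : ∀ᵐ x ∂μ, max (F1 x - f2 x) 0 = h (f2 x) := by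
    rw [ae_iff]
    refine measure_mono_null ?_ hBnull
    intro x hx
    by_contra hxB
    apply hx
    simp only [mem_union, mem_iUnion, not_or, not_exists] at hxB
    obtain ⟨⟨hx0, hx1⟩, hxA⟩ := hxB
    rw [mem_setOf_eq, not_le] at hx0
    rw [mem_setOf_eq, not_le] at hx1
    have hQx : Q2 (f2 x) = x := by
      have hle : Q2 (f2 x) ≤ x := by
        rw [hQ2]; exact csInf_le (hSbd _ hx0) (le_refl (f2 x))
      refine le_antisymm hle ?_
      by_contra hlt
      push_neg at hlt
      obtain ⟨q, hq1, hq2⟩ := exists_rat_btwn hlt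
      have h1 : f2 x ≤ f2 q := by
        have := f2.mono hq1.le
        rwa [hfQ2 (f2 x) hx0 hx1] at this
      have h2 : f2 (q : ℝ) ≤ f2 x := f2.mono hq2.le
      exact hxA q ⟨hq2, le_antisymm h1 h2, hx1⟩
    show max (F1 x - f2 x) 0 = h (f2 x)
    rw [hh]
    simp only [hQx]
  -- measurability of h on Ioo 0 1
  have hQ2mono : MonotoneOn Q2 (Ioo (0:ℝ) 1) := by
    intro u hu v hv huv
    rw [hQ2, hQ2]
    exact csInf_le_csInf (hSbd u hu.1) (hSne v hv.2) fun x hx => le_trans huv hx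
  have hhm : AEStronglyMeasurable h (volume.restrict (Ioo (0:ℝ) 1)) := by
    have hQ2ae : AEMeasurable Q2 (volume.restrict (Ioo (0:ℝ) 1)) :=
      aemeasurable_restrict_of_monotoneOn measurableSet_Ioo hQ2mono
    exact (((hF1c.measurable.comp_aemeasurable hQ2ae).sub aemeasurable_id).max
      aemeasurable_const).aestronglyMeasurable
  have hmap : μ.map f2 = volume.restrict (Ioo (0:ℝ) 1) :=
    map_f2 f2 hf2c hf2bot hf2top
  calc ∫ u in Ioo (0:ℝ) 1, max (R u - u) 0
      = ∫ u in Ioo (0:ℝ) 1, h u := by simp only [hh, hR]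
    _ = ∫ u, h u ∂(μ.map f2) := by rw [hmap]
    _ = ∫ x, h (f2 x) ∂μ :=
        integral_map hf2c.measurable.aemeasurable (hmap ▸ hhm)
    _ = ∫ x, max (F1 x - f2 x) 0 ∂μ := (integral_congr_ae hae).symm
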